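/- Let g be a symmetric 4×4 complex matrix with det g ≠ 0, and write g = gR + i·gI where gR and gI are real 4×4 matrices. Then the area metric of g is real, i.e. Im(g a c · g d b − g a d · g c b) = 0 for all indices a, b, c, d, if and only if g is real (gI = 0) or g is purely imaginary (gR = 0). -/
import Mathlib


private lemma pick2 : ∀ i l : Fin 4, ∃ k : Fin 4, k ≠ i ∧ k ≠ l := by decide

private lemma pick2' : ∀ i j : Fin 4, i ≠ j → ∃ k l : Fin 4,
    k ≠ i ∧ k ≠ j ∧ l ≠ i ∧ l ≠ j ∧ k ≠ l := by decide

private lemma key (h : Matrix (Fin 4) (Fin 4) ℂ)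
    (H : ∀ i j k l : Fin 4, h i k * h j l - h i l * h j k
        = (if i = k then (1:ℂ) else 0) * (if j = l then (1:ℂ) else 0)
          - (if i = l then (1:ℂ) else 0) * (if j = k then (1:ℂ) else 0)) :
    h = 1 ∨ h = -1 := by
  have offp : ∀ i j : Fin 4, i ≠ j → h i j * h j i = h i i * h j j - 1 := by
    intro i j hij
    have t := H i j i j
    simp [hij, hij.symm] at t
    linear_combination -t
  have prodid : ∀ i j k : Fin 4, i ≠ j → i ≠ k → j ≠ k →
      h i j * h k k = h i k * h k j := by
    intro i j k hij hik hjk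
    have t := H i k j k
    simp [hij, hik, hjk, hjk.symm, (hik.symm : k ≠ i)] at t
    linear_combination t
  have prodid2 : ∀ i k l : Fin 4, i ≠ k → i ≠ l → k ≠ l →
      h i i * h k l = h i l * h k i := by
    intro i k l hik hil hkl
    have t := H i k i l
    simp [hil, hkl, hik.symm] at t
    linear_combination t
  have hdiag : ∀ i : Fin 4, h i i ≠ 0 := by
    intro i hi0
    have claimA : ∀ k : Fin 4, i ≠ k → h i k * h k i = -1 := by
      intro k hk
      have t := offp i k hk
      rw [hi0] at t
      linear_combination t
    have claimB : ∀ l : Fin 4, i ≠ l → h i l = 0 := by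
      intro l hl
      obtain ⟨k, hki, hkl⟩ := pick2 i l
      have t := prodid2 i k l (Ne.symm hki) hl (hkl)
      rw [hi0] at t
      have hki' : h k i ≠ 0 := by
        intro h0
        have := claimA k (Ne.symm hki)
        rw [h0] at this
        simp at this
      have t2 : h i l * h k i = 0 := by linear_combination -t
      rcases mul_eq_zero.mp t2 with h1 | h1
      · exact h1
      · exact absurd h1 hki'
    obtain ⟨k, hki, _⟩ := pick2 i i
    have t := claimA k (Ne.symm hki)
    rw [claimB k (Ne.symm hki)] at t
    simp at t
  have xeq : ∀ i j k : Fin 4, i ≠ j → i ≠ k → j ≠ k →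
      h k k * h k k + 1 = (h i i + h j j) * h k k := by
    intro i j k hij hik hjk
    have e1 := prodid i j k hij hik hjk
    have e2 := prodid j i k hij.symm hjk hik
    have e3 := offp i j hij
    have e4 := offp i k hik
    have e5 := offp k j (Ne.symm hjk)
    have E1 : h i j * h j i * (h k k * h k k) = (h i k * h k i) * (h k j * h j k) := by
      linear_combination (h j i * h k k) * e1 + (h i k * h k j) * e2
    have E2 : (h i i * h j j - 1) * (h k k * h k k)
        = (h i i * h k k - 1) * (h k k * h j j - 1) := by
      linear_combination (-(h k k * h k k)) * e3 + E1 + (h k j * h j k) * e4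
        + (h i i * h k k - 1) * e5
    have E3 : h k k * (h k k * h k k + 1) = h k k * ((h i i + h j j) * h k k) := by
      linear_combination (-(h k k)) * E2
    exact mul_left_cancel₀ (hdiag k) E3
  have deq : ∀ k l : Fin 4, h k k = h l l := by
    intro k l
    by_cases hkl : k = l
    · rw [hkl]
    · obtain ⟨i, j, hik, hil, hjk, hjl, hij⟩ := pick2' k l hkl
      have A := xeq i l k hil hik (Ne.symm hkl)
      have B := xeq i j k hij hik hjk
      have C := xeq i k l hik hil hkl
      have D := xeq i j l hij hil hjl
      have hAB : (h l l - h j j) * h k k = 0 := by linear_combination B - A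
      have hCD : (h k k - h j j) * h l l = 0 := by linear_combination D - C
      have h1 : h l l = h j j := by
        rcases mul_eq_zero.mp hAB with h' | h'
        · exact sub_eq_zero.mp h'
        · exact absurd h' (hdiag k)
      have h2 : h k k = h j j := by
        rcases mul_eq_zero.mp hCD with h' | h'
        · exact sub_eq_zero.mp h'
        · exact absurd h' (hdiag l)
      rw [h1, h2]
  have ht2 : h 0 0 * h 0 0 = 1 := by
    have A := xeq 1 2 0 (by decide) (by decide) (by decide)
    rw [deq 1 0, deq 2 0] at A
    linear_combination -A
  have hidiag : ∀ i : Fin 4, h i i = h 0 0 := fun i => deq i 0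
  have hop : ∀ i j : Fin 4, i ≠ j → h i j * h j i = 0 := by
    intro i j hij
    have t := offp i j hij
    rw [hidiag i, hidiag j] at t
    rw [t]
    linear_combination ht2
  have offz : ∀ i j : Fin 4, i ≠ j → h i j = 0 := by
    intro i j hij
    by_contra hne
    obtain ⟨k, l, hki, hkj, hli, hlj, hkl⟩ := pick2' i j hij
    have e1 := prodid i j k hij (Ne.symm hki) (Ne.symm hkj)
    have e2 := prodid i j l hij (Ne.symm hli) (Ne.symm hlj)
    have h1 : h i k * h k j ≠ 0 := by rw [← e1]; exact mul_ne_zero hne (hdiag k)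
    have h2 : h i l * h l j ≠ 0 := by rw [← e2]; exact mul_ne_zero hne (hdiag l)
    have t3 := H i k j l
    simp [hij, hkl, Ne.symm hli, hkj] at t3
    have t4 := H i l j k
    simp [hij, Ne.symm hkl, Ne.symm hki, hlj] at t4
    have hkl0 : h k l ≠ 0 := by
      intro h0
      rw [h0] at t3
      have : h i l * h k j = 0 := by linear_combination -t3
      exact absurd this (mul_ne_zero (mul_ne_zero_iff.mp h2).1 (mul_ne_zero_iff.mp h1).2)
    have hlk0 : h l k ≠ 0 := by
      intro h0
      rw [h0] at t4
      have : h i k * h l j = 0 := by linear_combination -t4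
      exact absurd this (mul_ne_zero (mul_ne_zero_iff.mp h1).1 (mul_ne_zero_iff.mp h2).2)
    exact absurd (hop k l hkl) (mul_ne_zero hkl0 hlk0)
  rcases mul_self_eq_one_iff.mp ht2 with h1 | h1
  · left; ext i j
    by_cases hij : i = j
    · subst hij; rw [hidiag i, h1, Matrix.one_apply_eq]
    · rw [offz i j hij, Matrix.one_apply_ne hij]
  · right; ext i j
    by_cases hij : i = j
    · subst hij; rw [hidiag i, h1]; simp
    · rw [offz i j hij]; simp [Matrix.one_apply_ne hij]

private def Mi (A : Matrix (Fin 4) (Fin 4) ℂ) (i j k l : Fin 4) : ℂ :=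
  A i k * A j l - A i l * A j k

private lemma CB (A B : Matrix (Fin 4) (Fin 4) ℂ) (i j k l : Fin 4) :
    Mi (A * B) i j k l =
      Mi A i j 0 1 * Mi B 0 1 k l + Mi A i j 0 2 * Mi B 0 2 k l +
      Mi A i j 0 3 * Mi B 0 3 k l + Mi A i j 1 2 * Mi B 1 2 k l +
      Mi A i j 1 3 * Mi B 1 3 k l + Mi A i j 2 3 * Mi B 2 3 k l := by
  simp [Mi, Matrix.mul_apply, Fin.sum_univ_four]
  ring

/-- For a symmetric 4×4 complex matrix `g` with nonzero determinant,
the area metric `A a b c d = g a c * g d b - g a d * g c b` is real (entrywise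
zero imaginary part) iff `g` is entrywise real or entrywise purely imaginary. -/
theorem area_metric_real_iff_metric_real_or_imaginary
    (g : Matrix (Fin 4) (Fin 4) ℂ) (hsymm : g.IsSymm) (hdet : g.det ≠ 0) :
    (∀ a b c d : Fin 4, (g a c * g d b - g a d * g c b).im = 0) ↔
      ((∀ a b : Fin 4, (g a b).im = 0) ∨ (∀ a b : Fin 4, (g a b).re = 0)) := by
  constructor
  · intro H
    have hsy : ∀ a b : Fin 4, g a b = g b a := fun a b => hsymm.apply b a
    have Hreal : ∀ a b c d : Fin 4,
        (starRingEnd ℂ) (g a c * g b d - g a d * g b c) = g a c * g b d - g a d * g b c := by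
      intro a b c d
      have h0 := H a b c d
      rw [hsy d b, hsy c b] at h0
      exact Complex.conj_eq_iff_im.mpr h0
    set gc := g.map (starRingEnd ℂ) with hgc_def
    have hMeq : ∀ a b c d : Fin 4, Mi gc a b c d = Mi g a b c d := by
      intro a b c d
      simp only [Mi, hgc_def, Matrix.map_apply, ← map_mul, ← map_sub]
      exact Hreal a b c d
    have hU : IsUnit g.det := Ne.isUnit hdet
    have hinv : g * g⁻¹ = 1 := Matrix.mul_nonsing_inv g hU
    have hmain : ∀ i j k l : Fin 4,
        Mi (gc * g⁻¹) i j k l = Mi (1 : Matrix (Fin 4) (Fin 4) ℂ) i j k l := by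
      intro i j k l
      rw [CB]
      simp only [hMeq]
      rw [← CB, hinv]
    have hk := key (gc * g⁻¹) (by
      intro i j k l
      have h1 := hmain i j k l
      simpa [Mi, Matrix.one_apply] using h1)
    have hinv2 : g⁻¹ * g = 1 := Matrix.nonsing_inv_mul g hU
    rcases hk with hc | hc
    · left
      have hgcg : gc = g := by
        calc gc = gc * (g⁻¹ * g) := by rw [hinv2, Matrix.mul_one]
          _ = (gc * g⁻¹) * g := by rw [Matrix.mul_assoc]
          _ = g := by rw [hc, Matrix.one_mul]
      intro a b
      have h2 : (starRingEnd ℂ) (g a b) = g a b := congrFun (congrFun hgcg a) b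
      exact Complex.conj_eq_iff_im.mp h2
    · right
      have hgcg : gc = -g := by
        calc gc = gc * (g⁻¹ * g) := by rw [hinv2, Matrix.mul_one]
          _ = (gc * g⁻¹) * g := by rw [Matrix.mul_assoc]
          _ = -g := by rw [hc]; simp
      intro a b
      have h2 : (starRingEnd ℂ) (g a b) = -(g a b) := by
        have := congrFun (congrFun hgcg a) b
        simpa [hgc_def] using this
      have h3 := congrArg Complex.re h2
      simp at h3
      linarith
  · rintro (H | H) a b c d <;>
      simp [Complex.sub_im, Complex.mul_im, H]
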